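/- Let Φ be a continuous flow on a metric space and F a closed set that is invariant under the time-1 map Φ_1 and isolated invariant for Φ_1 with isolating neighborhood W. Suppose additionally F is invariant under Φ_k for all k ∈ ℤ and for every x ∈ F there is δ > 0 such that Φ_{k+t}(x) ∈ W for all k ∈ ℤ and t ∈ [0,δ]. Then F is invariant under the full flow: Φ_t(F) = F for all t ∈ ℝ. -/
import Mathlib


/-- If a closed set `F` is invariant under all integer-time maps of a flow `Φ`, is isolated
invariant for the time-1 map with isolating neighborhood `W`, and every point of `F` stays in
`W` for all times `k + t`, `k ∈ ℤ`, `t ∈ [0,δ]` for some `δ > 0`, then `F` is invariant under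
the full flow. -/
theorem time_one_isolated_implies_flow_invariant {X : Type*} [MetricSpace X]
    (Φ : ℝ → X → X)
    (hΦcont : Continuous fun p : ℝ × X => Φ p.1 p.2)
    (hflow0 : ∀ x, Φ 0 x = x)
    (hflow : ∀ t s : ℝ, ∀ x, Φ (t + s) x = Φ t (Φ s x))
    (F W : Set X) (hFcl : IsClosed F) (hWopen : IsOpen W) (hFW : F ⊆ W)
    (hiso : ∀ x : X, (∀ k : ℤ, Φ (k : ℝ) x ∈ W) → x ∈ F)
    (hFk : ∀ k : ℤ, Φ (k : ℝ) '' F = F)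
    (hδ : ∀ x ∈ F, ∃ δ > (0:ℝ), ∀ k : ℤ, ∀ t ∈ Set.Icc (0:ℝ) δ, Φ ((k : ℝ) + t) x ∈ W) :
    ∀ t : ℝ, Φ t '' F = F := by
  have stepA : ∀ x ∈ F, ∃ δ > (0:ℝ), ∀ t ∈ Set.Icc (0:ℝ) δ, Φ t x ∈ F := by
    intro x hx
    obtain ⟨δ, hδpos, h⟩ := hδ x hx
    refine ⟨δ, hδpos, fun t ht => hiso _ fun k => ?_⟩
    rw [← hflow]
    exact h k t ht
  have fwd : ∀ x ∈ F, ∀ t : ℝ, 0 ≤ t → Φ t x ∈ F := by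
    intro x hx t ht
    set T : Set ℝ := Set.Icc (0:ℝ) t ∩ (fun s => Φ s x) ⁻¹' F with hT
    have hTcl : IsClosed T :=
      isClosed_Icc.inter (hFcl.preimage (hΦcont.comp (continuous_id.prodMk continuous_const)))
    have h0T : (0:ℝ) ∈ T := ⟨⟨le_refl 0, ht⟩, by simp [hflow0, hx]⟩
    have hTne : T.Nonempty := ⟨0, h0T⟩
    have hTbdd : BddAbove T := ⟨t, fun s hs => hs.1.2⟩
    have hs := hTcl.csSup_mem hTne hTbdd
    set s := sSup T with hsdef
    have hst : s ≤ t := hs.1.2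
    have hs0 : 0 ≤ s := hs.1.1
    rcases eq_or_lt_of_le hst with heq | hlt
    · rw [← heq]; exact hs.2
    · exfalso
      obtain ⟨δ, hδpos, hδF⟩ := stepA _ hs.2
      set u := min δ (t - s) with hu
      have hu0 : 0 < u := lt_min hδpos (by linarith)
      have hmem : s + u ∈ T := by
        refine ⟨⟨by linarith, ?_⟩, ?_⟩
        · have := min_le_right δ (t - s); linarith
        · show Φ (s + u) x ∈ F
          rw [add_comm, hflow]
          exact hδF u ⟨le_of_lt hu0, min_le_left _ _⟩
      have := le_csSup hTbdd hmem
      linarith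
  have allt : ∀ x ∈ F, ∀ t : ℝ, Φ t x ∈ F := by
    intro x hx t
    obtain ⟨k, hk⟩ : ∃ k : ℤ, 0 ≤ t + k := ⟨⌈-t⌉, by have := Int.le_ceil (-t); push_cast; linarith⟩
    have hx' : Φ ((-k : ℤ) : ℝ) x ∈ F := by
      rw [← hFk (-k)]; exact ⟨x, hx, rfl⟩
    have h2 := fwd _ hx' (t + k) hk
    rw [← hflow] at h2
    have : (t + (k:ℝ)) + ((-k : ℤ) : ℝ) = t := by push_cast; ring
    rwa [this] at h2
  intro t
  ext y
  constructor
  · rintro ⟨x, hx, rfl⟩; exact allt x hx t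
  · intro hy
    refine ⟨Φ (-t) y, allt y hy (-t), ?_⟩
    rw [← hflow]
    simp [hflow0]
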